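/- Let G be a symmetry group of a discrete mechanical system (Q, L_d) with discrete momentum map J_d(q₀,q₁)(ξ) := -D₁L_d(q₀,q₁)(ξ_Q(q₀)). If a discrete curve q₀, q₁, q₂ satisfies the discrete Euler–Lagrange equation D₂L_d(q₀,q₁) + D₁L_d(q₁,q₂) = 0, then J_d(q₀,q₁) = J_d(q₁,q₂); i.e., the discrete momentum map is preserved along trajectories (discrete Noether's theorem). -/

import Mathlib

open scoped Manifold

/-- Infinitesimal generator of a left action `l : G → Q → Q` for `ξ ∈ 𝔤 = T₁G`. -/
noncomputable def xiGen
    {EG : Type*} [NormedAddCommGroup EG] [NormedSpace ℝ EG]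
    {HG : Type*} [TopologicalSpace HG] (IG : ModelWithCorners ℝ EG HG)
    {G : Type*} [TopologicalSpace G] [ChartedSpace HG G] [Group G]
    {EQ : Type*} [NormedAddCommGroup EQ] [NormedSpace ℝ EQ]
    {HQ : Type*} [TopologicalSpace HQ] (IQ : ModelWithCorners ℝ EQ HQ)
    {Q : Type*} [TopologicalSpace Q] [ChartedSpace HQ Q]
    (l : G → Q → Q) (ξ : TangentSpace IG (1 : G)) (q : Q) : TangentSpace IQ q :=
  mfderiv IG IQ (fun g => l g q) (1 : G) ξ

/-- Partial differential of the discrete Lagrangian in the first slot. -/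
noncomputable def D1Ld
    {EQ : Type*} [NormedAddCommGroup EQ] [NormedSpace ℝ EQ]
    {HQ : Type*} [TopologicalSpace HQ] (IQ : ModelWithCorners ℝ EQ HQ)
    {Q : Type*} [TopologicalSpace Q] [ChartedSpace HQ Q]
    (L : Q × Q → ℝ) (q0 q1 : Q) : TangentSpace IQ q0 →L[ℝ] ℝ :=
  mfderiv IQ 𝓘(ℝ, ℝ) (fun q => L (q, q1)) q0

/-- Partial differential of the discrete Lagrangian in the second slot. -/
noncomputable def D2Ld
    {EQ : Type*} [NormedAddCommGroup EQ] [NormedSpace ℝ EQ]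
    {HQ : Type*} [TopologicalSpace HQ] (IQ : ModelWithCorners ℝ EQ HQ)
    {Q : Type*} [TopologicalSpace Q] [ChartedSpace HQ Q]
    (L : Q × Q → ℝ) (q0 q1 : Q) : TangentSpace IQ q1 →L[ℝ] ℝ :=
  mfderiv IQ 𝓘(ℝ, ℝ) (fun q => L (q0, q)) q1

/-- discrete Noether's theorem: if the discrete curve `q₀,q₁,q₂`
satisfies the discrete Euler–Lagrange equation `D₂L_d(q₀,q₁) + D₁L_d(q₁,q₂) = 0`
and `L_d` is invariant under the diagonal `G`-action, then the discrete momentum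
map `J_d(q₀,q₁)(ξ) := -D₁L_d(q₀,q₁)(ξ_Q(q₀))` satisfies `J_d(q₀,q₁) = J_d(q₁,q₂)`. -/
theorem discrete_noether
    {EG : Type*} [NormedAddCommGroup EG] [NormedSpace ℝ EG]
    {HG : Type*} [TopologicalSpace HG] (IG : ModelWithCorners ℝ EG HG)
    {G : Type*} [TopologicalSpace G] [ChartedSpace HG G] [Group G] [LieGroup IG (⊤ : ℕ∞) G]
    {EQ : Type*} [NormedAddCommGroup EQ] [NormedSpace ℝ EQ]
    {HQ : Type*} [TopologicalSpace HQ] (IQ : ModelWithCorners ℝ EQ HQ)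
    {Q : Type*} [TopologicalSpace Q] [ChartedSpace HQ Q] [IsManifold IQ (⊤ : ℕ∞) Q]
    (l : G → Q → Q)
    (hact : ContMDiff (IG.prod IQ) IQ (⊤ : ℕ∞) (fun p : G × Q => l p.1 p.2))
    (hact1 : ∀ q, l (1 : G) q = q)
    (hactmul : ∀ g h q, l (g * h) q = l g (l h q))
    (L : Q × Q → ℝ) (hL : ContMDiff (IQ.prod IQ) 𝓘(ℝ, ℝ) (⊤ : ℕ∞) L)
    (hinv : ∀ (g : G) (q0 q1 : Q), L (l g q0, l g q1) = L (q0, q1))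
    (q0 q1 q2 : Q)
    (hEL : D2Ld IQ L q0 q1 + D1Ld IQ L q1 q2 = 0) :
    ∀ ξ : TangentSpace IG (1 : G),
      -(D1Ld IQ L q0 q1 (xiGen IG IQ l ξ q0)) = -(D1Ld IQ L q1 q2 (xiGen IG IQ l ξ q1)) := by
  intro ξ
  -- differentiability of the action in the group variable
  have hlq : ∀ q : Q, MDifferentiableAt IG IQ (fun g : G => l g q) (1 : G) := by
    intro q
    exact (hact.mdifferentiable (by simp) (1, q)).comp (1 : G)
      (mdifferentiableAt_id.prodMk mdifferentiableAt_const)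
  -- the map g ↦ (l g q0, l g q1)
  set φ : G → Q × Q := fun g => (l g q0, l g q1) with hφ
  have hφdiff : MDifferentiableAt IG (IQ.prod IQ) φ (1 : G) :=
    (hlq q0).prodMk (hlq q1)
  have hφ1 : φ (1 : G) = (q0, q1) := by simp [hφ, hact1]
  have hLdiff : MDifferentiableAt (IQ.prod IQ) 𝓘(ℝ, ℝ) L (q0, q1) :=
    (hL (q0, q1)).mdifferentiableAt (by simp)
  -- L ∘ φ is constant
  have hconst : (fun g : G => L (φ g)) = fun _ => L (q0, q1) := by
    funext g; exact hinv g q0 q1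
  have hzero : mfderiv IG 𝓘(ℝ, ℝ) (fun g : G => L (φ g)) (1 : G) = 0 := by
    rw [hconst]; exact mfderiv_const
  -- chain rule
  have hLdiff' : MDifferentiableAt (IQ.prod IQ) 𝓘(ℝ, ℝ) L (φ 1) := by
    rw [hφ1]; exact hLdiff
  have hcomp : mfderiv IG 𝓘(ℝ, ℝ) (fun g : G => L (φ g)) (1 : G) =
      (mfderiv (IQ.prod IQ) 𝓘(ℝ, ℝ) L (φ 1)).comp (mfderiv IG (IQ.prod IQ) φ (1 : G)) :=
    mfderiv_comp (1 : G) hLdiff' hφdiff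
  rw [hφ1] at hcomp
  have hφd : mfderiv IG (IQ.prod IQ) φ (1 : G) ξ =
      (xiGen IG IQ l ξ q0, xiGen IG IQ l ξ q1) := by
    rw [(hlq q0).mfderiv_prod (hlq q1)]; rfl
  have h := hcomp.symm.trans hzero
  have h1 : mfderiv (IQ.prod IQ) 𝓘(ℝ, ℝ) L (q0, q1)
      ((mfderiv IG (IQ.prod IQ) φ (1 : G)) ξ) = 0 := by
    calc mfderiv (IQ.prod IQ) 𝓘(ℝ, ℝ) L (q0, q1) ((mfderiv IG (IQ.prod IQ) φ (1 : G)) ξ)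
        = ((mfderiv (IQ.prod IQ) 𝓘(ℝ, ℝ) L (q0, q1)).comp
            (mfderiv IG (IQ.prod IQ) φ (1 : G))) ξ := rfl
      _ = (0 : TangentSpace IG (1 : G) →L[ℝ] TangentSpace 𝓘(ℝ, ℝ) (L (q0, q1))) ξ := by rw [h]; rfl
      _ = 0 := rfl
  rw [hφd] at h1
  replace h1 := (mfderiv_prod_eq_add_apply (I := IQ) (I' := IQ) (I'' := 𝓘(ℝ, ℝ))
    (v := (xiGen IG IQ l ξ q0, xiGen IG IQ l ξ q1)) hLdiff).symm.trans h1
  have hsum : D1Ld IQ L q0 q1 (xiGen IG IQ l ξ q0)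
      + D2Ld IQ L q0 q1 (xiGen IG IQ l ξ q1) = 0 := h1
  have hEL' : D2Ld IQ L q0 q1 (xiGen IG IQ l ξ q1)
      + D1Ld IQ L q1 q2 (xiGen IG IQ l ξ q1) = 0 := by
    have := congrArg (fun (f : _ →L[ℝ] ℝ) => f (xiGen IG IQ l ξ q1)) hEL
    simpa using this
  have := hsum
  linarith [hsum, hEL']
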